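/- In the group G = ⟨x, y | x²y² central⟩ (the fundamental group of the nontrivial orientable circle bundle over the Klein bottle), the element x² is central; consequently G is not bi-orderable, since x is not central in G (G surjects onto ℤ/2 * ℤ/2 by killing x² and y², which is non-abelian), contradicting the fact that in a bi-orderable group an element with a central power is central. -/

import Mathlib

/-- A group is bi-orderable if it admits a strict total order invariant under
left and right multiplication. -/
def IsBiOrderable (G : Type*) [Group G] : Prop :=
  ∃ r : G → G → Prop, IsStrictTotalOrder G r ∧
    (∀ f g h : G, r g h → r (f * g) (f * h)) ∧
    (∀ f g h : G, r g h → r (g * f) (h * f))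

/-- Relators making `x²y²` central in `⟨x, y | x²y² central⟩`, with
`x = of 0`, `y = of 1`: the commutators `[x²y², x]` and `[x²y², y]`. -/
def kleinBundleRels : Set (FreeGroup (Fin 2)) :=
  { (FreeGroup.of 0 ^ 2 * FreeGroup.of 1 ^ 2) * FreeGroup.of 0 *
      (FreeGroup.of 0 ^ 2 * FreeGroup.of 1 ^ 2)⁻¹ * (FreeGroup.of 0)⁻¹,
    (FreeGroup.of 0 ^ 2 * FreeGroup.of 1 ^ 2) * FreeGroup.of 1 *
      (FreeGroup.of 0 ^ 2 * FreeGroup.of 1 ^ 2)⁻¹ * (FreeGroup.of 1)⁻¹ }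

/-- In `G = ⟨x, y | x²y² central⟩` (the fundamental group of the nontrivial
orientable circle bundle over the Klein bottle), `x²` is central, and `G` is not
bi-orderable. -/
theorem kleinBundleGroup_xsq_central_not_biOrderable :
    (PresentedGroup.of (rels := kleinBundleRels) 0) ^ 2 ∈
        Subgroup.center (PresentedGroup kleinBundleRels) ∧
      ¬ IsBiOrderable (PresentedGroup kleinBundleRels) := by
  set G := PresentedGroup kleinBundleRels
  set X : G := PresentedGroup.of (rels := kleinBundleRels) 0 with hX
  set Y : G := PresentedGroup.of (rels := kleinBundleRels) 1 with hY
  -- the relators hold in G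
  have hrel : ∀ w ∈ kleinBundleRels, PresentedGroup.mk kleinBundleRels w = 1 := by
    intro w hw
    exact (QuotientGroup.eq_one_iff w).mpr (Subgroup.subset_normalClosure hw)
  have key : X ^ 2 * Y = Y * X ^ 2 := by
    have hr2 := hrel _ (Set.mem_insert_iff.mpr (Or.inr rfl))
    have h' : (X ^ 2 * Y ^ 2) * Y * (X ^ 2 * Y ^ 2)⁻¹ * Y⁻¹ = 1 := hr2
    have h3 : (X ^ 2 * Y) * Y ^ 2 = (Y * X ^ 2) * Y ^ 2 := by
      calc (X ^ 2 * Y) * Y ^ 2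
          = ((X ^ 2 * Y ^ 2) * Y * (X ^ 2 * Y ^ 2)⁻¹ * Y⁻¹) * (Y * (X ^ 2 * Y ^ 2)) := by
            group
        _ = 1 * (Y * (X ^ 2 * Y ^ 2)) := by rw [h']
        _ = (Y * X ^ 2) * Y ^ 2 := by group
    exact mul_right_cancel h3
  have hcomm : ∀ g : G, Commute (X ^ 2) g := by
    intro g
    have hg : g ∈ Subgroup.closure
        (Set.range (PresentedGroup.of : Fin 2 → G)) := by
      rw [PresentedGroup.closure_range_of]; trivial
    induction hg using Subgroup.closure_induction with
    | mem a ha =>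
        obtain ⟨i, rfl⟩ := ha
        fin_cases i
        · exact (Commute.refl X).pow_left 2
        · exact key
    | one => exact Commute.one_right _
    | mul a b _ _ ha hb => exact ha.mul_right hb
    | inv a _ ha => exact ha.inv_right
  have hcenter : X ^ 2 ∈ Subgroup.center G :=
    Subgroup.mem_center_iff.mpr fun g => (hcomm g).symm
  refine ⟨hcenter, ?_⟩
  rintro ⟨r, hsto, hl, hr⟩
  haveI := hsto.toTrichotomous
  haveI := hsto.toIsStrictOrder
  -- unique square roots in a bi-ordered group
  have uniq : ∀ a b : G, a ^ 2 = b ^ 2 → a = b := by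
    intro a b h
    rcases trichotomous_of r a b with hab | heq | hba
    · have h1 : r (a * a) (a * b) := hl _ _ _ hab
      have h2' : r (a * b) (b * b) := hr _ _ _ hab
      have : r (a * a) (b * b) := _root_.trans h1 h2'
      rw [← pow_two, ← pow_two, h] at this
      exact absurd this (irrefl _)
    · exact heq
    · have h1 : r (b * b) (b * a) := hl _ _ _ hba
      have h2' : r (b * a) (a * a) := hr _ _ _ hba
      have : r (b * b) (a * a) := _root_.trans h1 h2'
      rw [← pow_two, ← pow_two, h] at this
      exact absurd this (irrefl _)
  -- hence X is central, in particular commutes with Y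
  have hconj : (Y * X * Y⁻¹) ^ 2 = X ^ 2 := by
    have hc : (Y * X * Y⁻¹) ^ 2 = Y * X ^ 2 * Y⁻¹ := by
      rw [conj_pow]
    rw [hc]
    calc Y * X ^ 2 * Y⁻¹ = (Y * X ^ 2) * Y⁻¹ := by rw [mul_assoc]
      _ = (X ^ 2 * Y) * Y⁻¹ := by rw [key]
      _ = X ^ 2 := by group
  have hXY : X * Y = Y * X := by
    have := uniq _ _ hconj
    calc X * Y = (Y * X * Y⁻¹) * Y := by rw [this]
      _ = Y * X := by group
  -- map to the dihedral group of order 6 where the relators hold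
  have hmap : ∀ w ∈ kleinBundleRels,
      (FreeGroup.lift (fun i : Fin 2 => if i = 0 then (DihedralGroup.sr 0 : DihedralGroup 3)
        else DihedralGroup.sr 1)) w = 1 := by
    intro w hw
    rcases hw with h | h <;> subst h <;>
      simp only [map_mul, map_inv, map_pow, FreeGroup.lift_apply_of] <;> decide
  set φ := PresentedGroup.toGroup hmap
  have hφ := congrArg φ hXY
  have hφX : φ X = DihedralGroup.sr 0 := PresentedGroup.toGroup.of hmap
  have hφY : φ Y = DihedralGroup.sr 1 := PresentedGroup.toGroup.of hmap
  rw [map_mul, map_mul, hφX, hφY] at hφ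
  revert hφ
  decide
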